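/- Let G be a simple graph with m ≥ 1 edges, T_G triangles, and trussness t_G, and let x ≥ 0 be an integer. Let G(x) be the disjoint union of G with ℓ = ⌈m / C(x+2,2)⌉ disjoint copies of the complete graph K_{x+2}. Let T' and m' denote the number of triangles and edges of G(x). Then T'/m' ≤ t_G/2 + x/3. -/

import Mathlib

/-- The support of the edge `{u,v}` in graph `H`. -/
noncomputable def supp {V : Type*} (H : SimpleGraph V) (u v : V) : ℕ :=
  {w | H.Adj u w ∧ H.Adj v w}.ncard

/-- The number of triangles of `G`. -/
noncomputable def triCount {V : Type*} (G : SimpleGraph V) : ℕ :=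
  {t : Finset V | G.IsNClique 3 t}.ncard

/-- The trussness of `G`. -/
noncomputable def trussness {V : Type*} (G : SimpleGraph V) : ℕ :=
  sSup {k | ∃ H : SimpleGraph V, H ≤ G ∧ H ≠ ⊥ ∧ ∀ u v, H.Adj u v → k ≤ supp H u v}

/-- `G(x)`: the disjoint union of `G` with `ℓ` disjoint copies of the complete graph
`K_{x+2}` (the "spurious cliques"). -/
def addCliques {V : Type*} (G : SimpleGraph V) (x ℓ : ℕ) :
    SimpleGraph (V ⊕ (Fin ℓ × Fin (x + 2))) where
  Adj a b := (∃ u v, a = Sum.inl u ∧ b = Sum.inl v ∧ G.Adj u v) ∨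
    (∃ i u v, a = Sum.inr (i, u) ∧ b = Sum.inr (i, v) ∧ u ≠ v)
  symm := ⟨fun a b h => by
    rcases h with ⟨u, v, h1, h2, h3⟩ | ⟨i, u, v, h1, h2, h3⟩
    · exact Or.inl ⟨v, u, h2, h1, h3.symm⟩
    · exact Or.inr ⟨i, v, u, h2, h1, h3.symm⟩⟩
  loopless := ⟨fun a h => by
    rcases h with ⟨u, v, h1, h2, h3⟩ | ⟨i, u, v, h1, h2, h3⟩ <;> simp_all⟩

lemma addCliques_adj {V : Type*} {G : SimpleGraph V} {x ℓ : ℕ} {a b : V ⊕ (Fin ℓ × Fin (x + 2))} :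
    (addCliques G x ℓ).Adj a b ↔ ((∃ u v, a = Sum.inl u ∧ b = Sum.inl v ∧ G.Adj u v) ∨
      (∃ i u v, a = Sum.inr (i, u) ∧ b = Sum.inr (i, v) ∧ u ≠ v)) := Iff.rfl

lemma truss_set_bdd {V : Type*} [Fintype V] (G : SimpleGraph V) :
    BddAbove {k | ∃ H : SimpleGraph V, H ≤ G ∧ H ≠ ⊥ ∧ ∀ u v, H.Adj u v → k ≤ supp H u v} := by
  refine ⟨Fintype.card V, fun k hk => ?_⟩
  obtain ⟨H, -, hne, hsupp⟩ := hk
  obtain ⟨e, he⟩ := (SimpleGraph.edgeSet_nonempty).2 hne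
  induction e using Sym2.inductionOn with
  | _ u v =>
    refine (hsupp u v he).trans ?_
    calc supp H u v ≤ (Set.univ : Set V).ncard :=
          Set.ncard_le_ncard (Set.subset_univ _) (Set.finite_univ)
      _ = Fintype.card V := by rw [Set.ncard_univ, Nat.card_eq_fintype_card]

lemma trussness_mono {V : Type*} [Fintype V] {G₁ G₂ : SimpleGraph V} (h : G₁ ≤ G₂) :
    trussness G₁ ≤ trussness G₂ := by
  unfold trussness
  by_cases hS : {k | ∃ H : SimpleGraph V, H ≤ G₁ ∧ H ≠ ⊥ ∧ ∀ u v, H.Adj u v → k ≤ supp H u v}.Nonempty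
  · exact csSup_le_csSup (truss_set_bdd G₂) hS
      (fun k ⟨H, h1, h2, h3⟩ => ⟨H, h1.trans h, h2, h3⟩)
  · rw [Set.not_nonempty_iff_eq_empty.mp hS, csSup_empty]
    exact bot_le

lemma exists_low_edge {V : Type*} [Fintype V] (G : SimpleGraph V) (h : G ≠ ⊥) :
    ∃ u v, G.Adj u v ∧ supp G u v ≤ trussness G := by
  by_contra hc
  push_neg at hc
  have hmem : trussness G + 1 ∈
      {k | ∃ H : SimpleGraph V, H ≤ G ∧ H ≠ ⊥ ∧ ∀ u v, H.Adj u v → k ≤ supp H u v} :=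
    ⟨G, le_refl _, h, fun u v huv => hc u v huv⟩
  have h2 : trussness G + 1 ≤ trussness G := le_csSup (truss_set_bdd G) hmem
  omega

lemma triCount_delete {V : Type*} [Fintype V] (G : SimpleGraph V) {u v : V} (huv : G.Adj u v) :
    triCount G ≤ triCount (G.deleteEdges {s(u,v)}) + supp G u v := by
  classical
  have hsub : {t : Finset V | G.IsNClique 3 t} ⊆
      {t : Finset V | (G.deleteEdges {s(u,v)}).IsNClique 3 t} ∪
        ((fun w => ({u, v, w} : Finset V)) '' {w | G.Adj u w ∧ G.Adj v w}) := by
    intro t ht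
    by_cases huvt : u ∈ t ∧ v ∈ t
    · right
      have hcard : t.card = 3 := ht.2
      have : (t \ {u, v}).Nonempty := by
        rw [← Finset.card_pos]
        have h2 : ({u, v} : Finset V).card ≤ 2 := Finset.card_insert_le _ _ |>.trans (by simp)
        have := Finset.card_sdiff_add_card_eq_card (Finset.insert_subset huvt.1 (by simp [huvt.2]) : ({u,v} : Finset V) ⊆ t)
        omega
      obtain ⟨w, hw⟩ := this
      simp only [Finset.mem_sdiff, Finset.mem_insert, Finset.mem_singleton] at hw
      obtain ⟨hwt, hwne⟩ := hw
      push_neg at hwne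
      have hadj1 : G.Adj u w := ht.1 huvt.1 hwt (Ne.symm hwne.1)
      have hadj2 : G.Adj v w := ht.1 huvt.2 hwt (Ne.symm hwne.2)
      refine ⟨w, ⟨hadj1, hadj2⟩, ?_⟩
      show ({u, v, w} : Finset V) = t
      have hsub' : ({u, v, w} : Finset V) ⊆ t := by
        intro a ha
        simp only [Finset.mem_insert, Finset.mem_singleton] at ha
        rcases ha with rfl | rfl | rfl
        · exact huvt.1
        · exact huvt.2
        · exact hwt
      have hc3 : ({u, v, w} : Finset V).card = 3 := by
        rw [Finset.card_insert_of_notMem (by simp [huv.ne, Ne.symm hwne.1]),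
          Finset.card_insert_of_notMem (by simp [Ne.symm hwne.2])]
        simp
      exact Finset.eq_of_subset_of_card_le hsub' (by rw [hcard, hc3])
    · left
      refine ⟨fun a ha b hb hab => ?_, ht.2⟩
      rw [SimpleGraph.deleteEdges_adj]
      refine ⟨ht.1 ha hb hab, ?_⟩
      simp only [Set.mem_singleton_iff, Sym2.eq_iff]
      rintro (⟨rfl, rfl⟩ | ⟨rfl, rfl⟩)
      · exact huvt ⟨Finset.mem_coe.mp ha, Finset.mem_coe.mp hb⟩
      · exact huvt ⟨Finset.mem_coe.mp hb, Finset.mem_coe.mp ha⟩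
  calc triCount G ≤ ({t : Finset V | (G.deleteEdges {s(u,v)}).IsNClique 3 t} ∪
        ((fun w => ({u, v, w} : Finset V)) '' {w | G.Adj u w ∧ G.Adj v w})).ncard :=
        Set.ncard_le_ncard hsub ((Set.toFinite _).union ((Set.toFinite _).image _))
    _ ≤ triCount (G.deleteEdges {s(u,v)}) + supp G u v :=
        (Set.ncard_union_le _ _).trans
          (Nat.add_le_add (le_refl _) (Set.ncard_image_le (Set.toFinite _)))

lemma tri_le_truss_mul {V : Type*} [Fintype V] :
    ∀ (n : ℕ) (G : SimpleGraph V), G.edgeSet.ncard = n → triCount G ≤ trussness G * n := by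
  intro n
  induction n using Nat.strong_induction_on with
  | _ n ih =>
    intro G hn
    by_cases hbot : G = ⊥
    · subst hbot
      have : {t : Finset V | (⊥ : SimpleGraph V).IsNClique 3 t} = ∅ := by
        ext t; simp [SimpleGraph.isNClique_bot_iff]
      simp [triCount, this]
    · obtain ⟨u, v, huv, hsupp⟩ := exists_low_edge G hbot
      have hmem : s(u,v) ∈ G.edgeSet := huv
      have hn1 : 1 ≤ n := by
        rw [← hn]
        exact (Set.ncard_pos (Set.toFinite _)).2 ⟨_, hmem⟩
      have hdel : (G.deleteEdges {s(u,v)}).edgeSet.ncard = n - 1 := by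
        rw [SimpleGraph.edgeSet_deleteEdges, Set.ncard_diff_singleton_of_mem hmem, hn]
      have hIH := ih (n-1) (by omega) _ hdel
      have hmono : trussness (G.deleteEdges {s(u,v)}) ≤ trussness G :=
        trussness_mono (SimpleGraph.deleteEdges_le _)
      calc triCount G ≤ triCount (G.deleteEdges {s(u,v)}) + supp G u v := triCount_delete G huv
        _ ≤ trussness G * (n - 1) + trussness G := by
            have : triCount (G.deleteEdges {s(u,v)}) ≤ trussness G * (n-1) :=
              hIH.trans (Nat.mul_le_mul_right _ hmono)
            omega
        _ = trussness G * n := by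
            rw [← Nat.mul_succ]
            congr 1
            omega

lemma triCount_addCliques_le {V : Type*} [Fintype V] (G : SimpleGraph V) (x ℓ : ℕ) :
    triCount (addCliques G x ℓ) ≤ triCount G + ℓ * (x + 2).choose 3 := by
  classical
  set W := Fin ℓ × Fin (x + 2) with hW
  let emb1 : V ↪ V ⊕ W := ⟨Sum.inl, Sum.inl_injective⟩
  let emb2 : Fin ℓ → (Fin (x + 2) ↪ V ⊕ W) := fun i =>
    ⟨fun v => Sum.inr (i, v), fun a b h => congrArg Prod.snd (Sum.inr_injective h)⟩
  have hsub : {t : Finset (V ⊕ W) | (addCliques G x ℓ).IsNClique 3 t} ⊆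
      ((fun s => s.map emb1) '' {s : Finset V | G.IsNClique 3 s}) ∪
      ((fun p : Fin ℓ × Finset (Fin (x+2)) => p.2.map (emb2 p.1)) ''
        {p : Fin ℓ × Finset (Fin (x+2)) | p.2.card = 3}) := by
    intro t ht
    have hcard : t.card = 3 := ht.2
    obtain ⟨a0, ha0⟩ : t.Nonempty := Finset.card_pos.mp (by omega)
    have hconst : ∀ a ∈ t, ∀ b ∈ t,
        Sum.elim (fun _ => (none : Option (Fin ℓ))) (fun p => some p.1) a =
        Sum.elim (fun _ => (none : Option (Fin ℓ))) (fun p => some p.1) b := by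
      intro a ha b hb
      by_cases hab : a = b
      · rw [hab]
      · rcases addCliques_adj.mp (ht.1 ha hb hab) with ⟨u', v', rfl, rfl, -⟩ | ⟨i, u', v', rfl, rfl, -⟩ <;> rfl
    match a0, ha0 with
    | Sum.inl u0, ha0 =>
      left
      have hall : ∀ b ∈ t, ∃ v, b = Sum.inl v := by
        intro b hb
        have := hconst _ ha0 b hb
        match b with
        | Sum.inl v => exact ⟨v, rfl⟩
        | Sum.inr p => simp at this
      set s := t.preimage Sum.inl Sum.inl_injective.injOn with hs
      have hteq : s.map emb1 = t := by
        ext b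
        simp only [Finset.mem_map, hs, Finset.mem_preimage]
        constructor
        · rintro ⟨v, hv, rfl⟩; exact hv
        · intro hb
          obtain ⟨v, rfl⟩ := hall b hb
          exact ⟨v, hb, rfl⟩
      refine ⟨s, ⟨?_, ?_⟩, hteq⟩
      · intro a ha b hb hab
        have h1 : Sum.inl a ∈ t := Finset.mem_preimage.mp ha
        have h2 : Sum.inl b ∈ t := Finset.mem_preimage.mp hb
        rcases addCliques_adj.mp (ht.1 h1 h2 (by simpa using hab)) with ⟨u', v', he1, he2, hadj⟩ | ⟨i, u', v', he1, he2, -⟩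
        · obtain rfl : a = u' := by simpa using he1
          obtain rfl : b = v' := by simpa using he2
          exact hadj
        · simp at he1
      · have := Finset.card_map emb1 (s := s)
        rw [hteq] at this
        omega
    | Sum.inr (i0, w0), ha0 =>
      right
      have hall : ∀ b ∈ t, ∃ v, b = Sum.inr (i0, v) := by
        intro b hb
        have := hconst _ ha0 b hb
        match b with
        | Sum.inl v => simp at this
        | Sum.inr (j, v) =>
          simp only [Sum.elim_inr, Option.some.injEq] at this
          exact ⟨v, by rw [← this]⟩
      have hinj : Function.Injective (fun v : Fin (x+2) => (Sum.inr (i0, v) : V ⊕ W)) :=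
        fun a b h => congrArg Prod.snd (Sum.inr_injective h)
      set s := t.preimage (fun v => Sum.inr (i0, v)) hinj.injOn with hs
      have hteq : s.map (emb2 i0) = t := by
        ext b
        simp only [Finset.mem_map, hs, Finset.mem_preimage]
        constructor
        · rintro ⟨v, hv, rfl⟩; exact hv
        · intro hb
          obtain ⟨v, rfl⟩ := hall b hb
          exact ⟨v, hb, rfl⟩
      refine ⟨(i0, s), ?_, hteq⟩
      have := Finset.card_map (emb2 i0) (s := s)
      rw [hteq] at this
      simpa using this.symm.trans hcard
  have hB : {p : Fin ℓ × Finset (Fin (x+2)) | p.2.card = 3}.ncard = ℓ * (x + 2).choose 3 := by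
    have : {p : Fin ℓ × Finset (Fin (x+2)) | p.2.card = 3} =
        ↑(((Finset.univ : Finset (Fin ℓ)) ×ˢ
            (Finset.powersetCard 3 (Finset.univ : Finset (Fin (x+2))))) :
          Finset (Fin ℓ × Finset (Fin (x+2)))) := by
      ext p
      simp [Finset.mem_powersetCard]
    rw [this, Set.ncard_coe_finset, Finset.card_product, Finset.card_powersetCard]
    simp
  calc triCount (addCliques G x ℓ)
      ≤ (((fun s => s.map emb1) '' {s : Finset V | G.IsNClique 3 s}) ∪
      ((fun p : Fin ℓ × Finset (Fin (x+2)) => p.2.map (emb2 p.1)) ''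
        {p : Fin ℓ × Finset (Fin (x+2)) | p.2.card = 3})).ncard :=
        Set.ncard_le_ncard hsub ((Set.toFinite _).union (Set.toFinite _))
    _ ≤ _ := by
        refine (Set.ncard_union_le _ _).trans ?_
        have h1 := Set.ncard_image_le (s := {s : Finset V | G.IsNClique 3 s})
          (f := fun s => s.map emb1) (Set.toFinite _)
        have h2 := Set.ncard_image_le (s := {p : Fin ℓ × Finset (Fin (x+2)) | p.2.card = 3})
          (f := fun p : Fin ℓ × Finset (Fin (x+2)) => p.2.map (emb2 p.1)) (Set.toFinite _)
        rw [hB] at h2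
        exact Nat.add_le_add h1 h2

lemma edges_addCliques_ge {V : Type*} [Fintype V] (G : SimpleGraph V) (x ℓ : ℕ) :
    G.edgeSet.ncard + ℓ * (x + 2).choose 2 ≤ (addCliques G x ℓ).edgeSet.ncard := by
  classical
  set W := Fin ℓ × Fin (x + 2) with hW
  set A : Set (Sym2 (V ⊕ W)) := Sym2.map Sum.inl '' G.edgeSet with hA
  set B : Set (Sym2 (V ⊕ W)) :=
    (fun p : Fin ℓ × Sym2 (Fin (x+2)) => Sym2.map (fun v => (Sum.inr (p.1, v) : V ⊕ W)) p.2) ''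
      {p : Fin ℓ × Sym2 (Fin (x+2)) | ¬ p.2.IsDiag} with hB
  have hsub : A ∪ B ⊆ (addCliques G x ℓ).edgeSet := by
    rintro e (⟨e', he', rfl⟩ | ⟨⟨i, e'⟩, he', rfl⟩)
    · induction e' using Sym2.inductionOn with
      | _ u v =>
        rw [Sym2.map_pair_eq, SimpleGraph.mem_edgeSet]
        exact addCliques_adj.mpr (Or.inl ⟨u, v, rfl, rfl, he'⟩)
    · induction e' using Sym2.inductionOn with
      | _ u v =>
        simp only [Set.mem_setOf_eq, Sym2.mk_isDiag_iff] at he'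
        simp only [Sym2.map_pair_eq, SimpleGraph.mem_edgeSet]
        exact addCliques_adj.mpr (Or.inr ⟨i, u, v, rfl, rfl, he'⟩)
  have hdisj : Disjoint A B := by
    rw [Set.disjoint_left]
    rintro e ⟨e1, -, rfl⟩ ⟨⟨i, e2⟩, -, heq⟩
    induction e1 using Sym2.inductionOn with
    | _ u v =>
      induction e2 using Sym2.inductionOn with
      | _ a b =>
        simp only [Sym2.map_pair_eq, Sym2.eq_iff] at heq
        rcases heq with ⟨h1, -⟩ | ⟨h1, -⟩ <;> exact absurd h1 (by simp)
  have hAcard : A.ncard = G.edgeSet.ncard :=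
    Set.ncard_image_of_injective _ (Sym2.map.injective Sum.inl_injective)
  have hBcard : B.ncard = ℓ * (x + 2).choose 2 := by
    have hinj : Function.Injective
        (fun p : Fin ℓ × Sym2 (Fin (x+2)) => Sym2.map (fun v => (Sum.inr (p.1, v) : V ⊕ W)) p.2) := by
      rintro ⟨i, e⟩ ⟨j, e'⟩ h
      induction e using Sym2.inductionOn with
      | _ a b =>
        induction e' using Sym2.inductionOn with
        | _ c d =>
          simp only [Sym2.map_pair_eq, Sym2.eq_iff, Sum.inr.injEq, Prod.mk.injEq] at h
          rcases h with ⟨⟨rfl, rfl⟩, -, rfl⟩ | ⟨⟨rfl, rfl⟩, -, rfl⟩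
          · rfl
          · simp [Prod.ext_iff, Sym2.eq_iff]
    rw [hB, Set.ncard_image_of_injective _ hinj]
    have : {p : Fin ℓ × Sym2 (Fin (x+2)) | ¬ p.2.IsDiag} =
        ↑((Finset.univ : Finset (Fin ℓ)) ×ˢ (⊤ : SimpleGraph (Fin (x+2))).edgeFinset) := by
      ext ⟨i, e⟩
      simp [SimpleGraph.mem_edgeFinset, SimpleGraph.edgeSet_top]
    rw [this, Set.ncard_coe_finset, Finset.card_product,
      SimpleGraph.card_edgeFinset_top_eq_card_choose_two]
    simp
  calc G.edgeSet.ncard + ℓ * (x + 2).choose 2 = (A ∪ B).ncard := by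
        rw [Set.ncard_union_eq hdisj (Set.toFinite _) (Set.toFinite _), hAcard, hBcard]
    _ ≤ (addCliques G x ℓ).edgeSet.ncard := Set.ncard_le_ncard hsub (Set.toFinite _)

lemma choose_rel (x : ℕ) : 3 * (x + 2).choose 3 = x * (x + 2).choose 2 := by
  have h1 := Nat.add_one_mul_choose_eq (x+1) 2
  have h2 := Nat.add_one_mul_choose_eq x 1
  have h3 := Nat.add_one_mul_choose_eq (x+1) 1
  simp only [Nat.succ_eq_add_one, Nat.choose_one_right] at h1 h2 h3
  nlinarith [h1, h2, h3]

/-- With `ℓ = ⌈m / C(x+2,2)⌉`, the triangle density of `G(x)` is at most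
`t_G/2 + x/3`. -/
theorem addCliques_density_le {V : Type*} [Fintype V]
    (G : SimpleGraph V) (x ℓ : ℕ) (hm : 1 ≤ G.edgeSet.ncard)
    (hℓ : ℓ = ⌈(G.edgeSet.ncard : ℚ) / ((x + 2).choose 2 : ℚ)⌉₊) :
    (triCount (addCliques G x ℓ) : ℝ) / ((addCliques G x ℓ).edgeSet.ncard : ℝ) ≤
      (trussness G : ℝ) / 2 + (x : ℝ) / 3 := by
  classical
  have hC2 : 0 < (x + 2).choose 2 := Nat.choose_pos (by omega)
  have hmℓ : G.edgeSet.ncard ≤ ℓ * (x + 2).choose 2 := by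
    have h1 : ((G.edgeSet.ncard : ℚ) / ((x + 2).choose 2 : ℚ)) ≤ (ℓ : ℚ) := by
      rw [hℓ]; exact Nat.le_ceil _
    rw [div_le_iff₀ (by exact_mod_cast hC2)] at h1
    exact_mod_cast h1
  have hT' := triCount_addCliques_le G x ℓ
  have hE := edges_addCliques_ge G x ℓ
  have hTm : triCount G ≤ trussness G * G.edgeSet.ncard :=
    tri_le_truss_mul G.edgeSet.ncard G rfl
  have h3 : 3 * (ℓ * (x + 2).choose 3) = x * (ℓ * (x + 2).choose 2) := by
    calc 3 * (ℓ * (x + 2).choose 3) = ℓ * (3 * (x + 2).choose 3) := by ring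
      _ = ℓ * (x * (x + 2).choose 2) := by rw [choose_rel]
      _ = x * (ℓ * (x + 2).choose 2) := by ring
  set m := G.edgeSet.ncard with hmdef
  set T := triCount G with hTdef
  set t := trussness G with htdef
  set m' := (addCliques G x ℓ).edgeSet.ncard with hm'def
  set T' := triCount (addCliques G x ℓ) with hT'def
  set L2 := ℓ * (x + 2).choose 2 with hL2def
  set L3 := ℓ * (x + 2).choose 3 with hL3def
  have hm'pos : 0 < m' := by omega
  rw [div_le_iff₀ (by exact_mod_cast hm'pos)]
  have h2m : (2 * m : ℝ) ≤ (m' : ℝ) := by exact_mod_cast by omega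
  have hL2m : (L2 : ℝ) ≤ (m' : ℝ) := by exact_mod_cast by omega
  have hA : (t : ℝ) * (2 * m) ≤ (t : ℝ) * m' :=
    mul_le_mul_of_nonneg_left h2m (by positivity)
  have hB : (x : ℝ) * L2 ≤ (x : ℝ) * m' :=
    mul_le_mul_of_nonneg_left hL2m (by positivity)
  have hT'R : (T' : ℝ) ≤ (T : ℝ) + L3 := by exact_mod_cast hT'
  have hTmR : (T : ℝ) ≤ (t : ℝ) * m := by exact_mod_cast hTm
  have h3R : 3 * (L3 : ℝ) = (x : ℝ) * L2 := by exact_mod_cast h3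
  nlinarith [hA, hB, hT'R, hTmR, h3R]
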